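/- Let G be a connected threshold graph with stepwise adjacency matrix (a_{ij}) and 2 ≤ q < k < h < p with a_{pq}=0, a_{pj}=1 for j<q, a_{iq}=1 for q<i<p, a_{hk}=1, a_{hj}=0 for j>k, a_{ik}=0 for i>h. If x is the Perron vector of A_α(G) with eigenvalue ρ₁, then (ρ₁ - kα)(x_h - x_p) = (k-q+1)·α·x_p + (1-α)·(x_q + x_{q+1} + ... + x_k). -/

import Mathlib

open SimpleGraph

/-- The graph `2K₂` on four vertices: two disjoint edges. -/
def twoK2 : SimpleGraph (Fin 4) :=
  SimpleGraph.fromRel (fun a b => (a = 0 ∧ b = 1) ∨ (a = 2 ∧ b = 3))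

/-- A graph is a threshold graph if it has no induced subgraph isomorphic to
`2K₂`, `C₄` or `P₄`.  (Graph embeddings are induced-subgraph embeddings.) -/
def IsThreshold {V : Type} (G : SimpleGraph V) : Prop :=
  IsEmpty (twoK2 ↪g G) ∧ IsEmpty (SimpleGraph.cycleGraph 4 ↪g G) ∧
    IsEmpty (SimpleGraph.pathGraph 4 ↪g G)

open Matrix

noncomputable def Aalpha {n : ℕ} (G : SimpleGraph (Fin n)) (α : ℝ) :
    Matrix (Fin n) (Fin n) ℝ :=
  letI := Classical.decRel G.Adj
  α • Matrix.diagonal (fun v => (G.degree v : ℝ)) + (1 - α) • G.adjMatrix ℝ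

def IsMaxEigenvalue {n : ℕ} (M : Matrix (Fin n) (Fin n) ℝ) (q : ℝ) : Prop :=
  (∃ x : Fin n → ℝ, x ≠ 0 ∧ M.mulVec x = q • x) ∧
  ∀ (μ : ℝ) (x : Fin n → ℝ), x ≠ 0 → M.mulVec x = μ • x → μ ≤ q

/-- The vertex `v_i` (1-indexed, as in the paper) of a graph on `Fin n`;
for `1 ≤ i ≤ n` this is the element `i - 1` of `Fin n`. -/
def vx {n : ℕ} (hn : 0 < n) (i : ℕ) : Fin n := ⟨(i - 1) % n, Nat.mod_lt _ hn⟩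

/-- The adjacency matrix of `G` (with the 1-indexed vertex ordering `vx`) is
stepwise: if `h > k` and `v_h ~ v_k`, then `v_i ~ v_j` for all `j < i ≤ h`, `j ≤ k`. -/
def Stepwise {n : ℕ} (hn : 0 < n) (G : SimpleGraph (Fin n)) : Prop :=
  ∀ h k : ℕ, 1 ≤ k → k < h → h ≤ n → G.Adj (vx hn h) (vx hn k) →
    ∀ i j : ℕ, 1 ≤ j → j < i → i ≤ h → j ≤ k → G.Adj (vx hn i) (vx hn j)

lemma vx_coe {n : ℕ} (hn : 0 < n) {i : ℕ} (h2 : i ≤ n) : ((vx hn i : Fin n) : ℕ) = i - 1 :=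
  Nat.mod_eq_of_lt (by omega)

lemma vx_inj {n : ℕ} (hn : 0 < n) {i j : ℕ} (h1 : 1 ≤ i) (h2 : i ≤ n) (h3 : 1 ≤ j)
    (h4 : j ≤ n) (he : vx hn i = vx hn j) : i = j := by
  have := congrArg Fin.val he
  rw [vx_coe hn h2, vx_coe hn h4] at this
  omega

lemma vx_surj {n : ℕ} (hn : 0 < n) (u : Fin n) : u = vx hn ((u : ℕ) + 1) := by
  apply Fin.ext
  rw [vx_coe hn (by omega)]
  simp

lemma coord {n : ℕ} (hn : 0 < n) (G : SimpleGraph (Fin n)) (α ρ : ℝ) (x : Fin n → ℝ)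
    (hev : (Aalpha G α).mulVec x = ρ • x) (v : Fin n) (b : ℕ) (hb : b ≤ n)
    (hadj : ∀ u, G.Adj v u ↔ ∃ j, 1 ≤ j ∧ j ≤ b ∧ u = vx hn j) :
    ρ * x v = α * (b : ℝ) * x v + (1 - α) * ∑ j ∈ Finset.Icc 1 b, x (vx hn j) := by
  letI : DecidableRel G.Adj := Classical.decRel G.Adj
  have hinj : ∀ i ∈ Finset.Icc 1 b, ∀ j ∈ Finset.Icc 1 b, vx hn i = vx hn j → i = j := by
    intro i hi j hj he
    simp only [Finset.mem_Icc] at hi hj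
    exact vx_inj hn hi.1 (by omega) hj.1 (by omega) he
  have hnb : G.neighborFinset v = (Finset.Icc 1 b).image (vx hn) := by
    ext u
    simp only [SimpleGraph.mem_neighborFinset, hadj, Finset.mem_image, Finset.mem_Icc]
    constructor
    · rintro ⟨j, h1, h2, rfl⟩; exact ⟨j, ⟨h1, h2⟩, rfl⟩
    · rintro ⟨j, ⟨h1, h2⟩, rfl⟩; exact ⟨j, h1, h2, rfl⟩
  have hdeg : G.degree v = b := by
    rw [SimpleGraph.degree, hnb, Finset.card_image_of_injOn hinj, Nat.card_Icc]
    omega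
  have h1 := congrFun hev v
  simp only [Aalpha, Matrix.add_mulVec, Matrix.smul_mulVec, Pi.add_apply,
    Pi.smul_apply, smul_eq_mul, Matrix.mulVec_diagonal,
    SimpleGraph.adjMatrix_mulVec_apply] at h1
  rw [hnb, Finset.sum_image hinj, hdeg] at h1
  linarith [h1]

theorem stmt14 {n : ℕ} (hn : 0 < n) (G : SimpleGraph (Fin n)) (hconn : G.Connected)
    (hth : IsThreshold G) (hstep : Stepwise hn G)
    (p q h k : ℕ) (hq2 : 2 ≤ q) (hqk : q < k) (hkh : k < h) (hhp : h < p) (hpn : p ≤ n)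
    (hpq : ¬ G.Adj (vx hn p) (vx hn q))
    (hpj : ∀ j, 1 ≤ j → j < q → G.Adj (vx hn p) (vx hn j))
    (hiq : ∀ i, q < i → i < p → G.Adj (vx hn i) (vx hn q))
    (hhk : G.Adj (vx hn h) (vx hn k))
    (hhj : ∀ j, k < j → j ≤ n → ¬ G.Adj (vx hn h) (vx hn j))
    (hik : ∀ i, h < i → i ≤ n → ¬ G.Adj (vx hn i) (vx hn k))
    (α : ℝ) (hα0 : 0 ≤ α) (hα1 : α < 1)
    (ρ₁ : ℝ) (x : Fin n → ℝ) (hx : ∀ v, 0 < x v)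
    (hev : (Aalpha G α).mulVec x = ρ₁ • x)
    (hmax : IsMaxEigenvalue (Aalpha G α) ρ₁) :
    (ρ₁ - (k : ℝ) * α) * (x (vx hn h) - x (vx hn p)) =
      ((k : ℝ) - (q : ℝ) + 1) * α * x (vx hn p) +
        (1 - α) * ∑ j ∈ Finset.Icc q k, x (vx hn j) := by
  have hHadj : ∀ j, 1 ≤ j → j ≤ n → (G.Adj (vx hn h) (vx hn j) ↔ j ≤ k) := by
    intro j h1 h2
    constructor
    · intro hadj
      by_contra hc
      exact hhj j (by omega) h2 hadj
    · intro hjk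
      rcases eq_or_lt_of_le hjk with rfl | hlt
      · exact hhk
      · exact hstep h k (by omega) hkh (by omega) hhk h j h1 (by omega) le_rfl (by omega)
  have hPadj : ∀ j, 1 ≤ j → j ≤ n → (G.Adj (vx hn p) (vx hn j) ↔ j ≤ q - 1) := by
    intro j h1 h2
    constructor
    · intro hadj
      by_contra hc
      have hjq : q ≤ j := by omega
      rcases eq_or_lt_of_le hjq with rfl | hqj
      · exact hpq hadj
      rcases lt_trichotomy j p with hjp | rfl | hpj'
      · exact hpq (hstep p j (by omega) hjp hpn hadj p q (by omega) (by omega) le_rfl (by omega))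
      · exact G.irrefl hadj
      · exact hpq (hstep j p (by omega) hpj' h2 hadj.symm p q (by omega) (by omega)
          (by omega) (by omega))
    · intro hjq
      exact hpj j h1 (by omega)
  have eqH := coord hn G α ρ₁ x hev (vx hn h) k (by omega) (by
    intro u
    constructor
    · intro hadj
      refine ⟨(u : ℕ) + 1, by omega, ?_, vx_surj hn u⟩
      have := (hHadj ((u : ℕ) + 1) (by omega) (by omega)).mp (by rwa [← vx_surj hn u])
      exact this
    · rintro ⟨j, h1, h2, rfl⟩
      exact (hHadj j h1 (by omega)).mpr h2)
  have eqP := coord hn G α ρ₁ x hev (vx hn p) (q - 1) (by omega) (by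
    intro u
    constructor
    · intro hadj
      refine ⟨(u : ℕ) + 1, by omega, ?_, vx_surj hn u⟩
      exact (hPadj ((u : ℕ) + 1) (by omega) (by omega)).mp (by rwa [← vx_surj hn u])
    · rintro ⟨j, h1, h2, rfl⟩
      exact (hPadj j h1 (by omega)).mpr h2)
  have hcast : ((q - 1 : ℕ) : ℝ) = (q : ℝ) - 1 := by
    rw [Nat.cast_sub (by omega), Nat.cast_one]
  rw [hcast] at eqP
  have hsplit : ∑ j ∈ Finset.Icc 1 (q - 1), x (vx hn j) + ∑ j ∈ Finset.Icc q k, x (vx hn j)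
      = ∑ j ∈ Finset.Icc 1 k, x (vx hn j) := by
    have e1 : Finset.Icc 1 k = Finset.Ioc 0 k := by rw [← Finset.Icc_add_one_left_eq_Ioc, zero_add]
    have e2 : Finset.Icc q k = Finset.Ioc (q - 1) k := by
      rw [← Finset.Icc_add_one_left_eq_Ioc]; congr 1; omega
    have e3 : Finset.Icc 1 (q - 1) = Finset.Ioc 0 (q - 1) := by rw [← Finset.Icc_add_one_left_eq_Ioc, zero_add]
    rw [e1, e2, e3]
    exact Finset.sum_Ioc_consecutive _ (by omega) (by omega)
  linear_combination eqH - eqP - (1 - α) * hsplit
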